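/- Fix α>0 and for a natural number n set k_n^{(α)} = Γ(α+n+1)/(Γ(α)·Γ(n+1)). Then there exists a constant C > 0 such that for every real y ≥ 0: if y ∈ [0,1) then |k_{⌊y⌋}^{(α)} − y^α/Γ(α)| ≤ C, and if y ≥ 1 then |k_{⌊y⌋}^{(α)} − y^α/Γ(α)| ≤ C·y^{α−1}; here ⌊y⌋ denotes the greatest integer not exceeding y. -/

import Mathlib

open Real

private lemma myGamma_add_nat {t : ℝ} (ht : 0 < t) (m : ℕ) :
    Real.Gamma (t + m) = Real.Gamma t * ∏ j ∈ Finset.range m, (t + j) := by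
  induction m with
  | zero => simp
  | succ m ih =>
    have hm : (0:ℝ) ≤ (m:ℝ) := Nat.cast_nonneg m
    have h2 : (0:ℝ) < t + m := by linarith
    have h1 : t + ((m : ℕ) + 1 : ℕ) = (t + m) + 1 := by push_cast; ring
    rw [h1, Real.Gamma_add_one h2.ne', ih, Finset.prod_range_succ]
    ring

private lemma interp_le {x s : ℝ} (hx : 0 < x) (hs0 : 0 ≤ s) (hs1 : s ≤ 1) :
    Real.Gamma (x + s) ≤ Real.Gamma x * x ^ s := by
  have hx1 : (0:ℝ) < x + 1 := by linarith
  have hxs : 0 < x + s := by linarith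
  have hg : 0 < Real.Gamma x := Real.Gamma_pos_of_pos hx
  have h := Real.convexOn_log_Gamma.2 (Set.mem_Ioi.mpr hx) (Set.mem_Ioi.mpr hx1)
      (by linarith : (0:ℝ) ≤ 1 - s) hs0 (by ring)
  simp only [smul_eq_mul, Function.comp_apply] at h
  rw [show (1 - s) * x + s * (x + 1) = x + s by ring, Real.Gamma_add_one hx.ne',
    Real.log_mul hx.ne' hg.ne'] at h
  have hrhs : (1 - s) * Real.log (Real.Gamma x) + s * (Real.log x + Real.log (Real.Gamma x))
      = Real.log (Real.Gamma x * x ^ s) := by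
    rw [Real.log_mul hg.ne' (Real.rpow_pos_of_pos hx s).ne', Real.log_rpow hx]
    ring
  rw [hrhs] at h
  exact (Real.log_le_log_iff (Real.Gamma_pos_of_pos hxs) (by positivity)).mp h

private lemma interp_ge {x s : ℝ} (hx : 0 < x) (hs0 : 0 ≤ s) (hs1 : s ≤ 1) (h1 : 1 < x + s) :
    Real.Gamma x * (x + s - 1) ^ s ≤ Real.Gamma (x + s) := by
  have hq : 0 < x + s - 1 := by linarith
  have hxs : 0 < x + s := by linarith
  have hg : 0 < Real.Gamma x := Real.Gamma_pos_of_pos hx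
  have hgq : 0 < Real.Gamma (x + s - 1) := Real.Gamma_pos_of_pos hq
  have h := Real.convexOn_log_Gamma.2 (Set.mem_Ioi.mpr hq) (Set.mem_Ioi.mpr hxs)
      hs0 (by linarith : (0:ℝ) ≤ 1 - s) (by ring)
  simp only [smul_eq_mul, Function.comp_apply] at h
  rw [show s * (x + s - 1) + (1 - s) * (x + s) = x by ring] at h
  have hG : Real.Gamma (x + s) = (x + s - 1) * Real.Gamma (x + s - 1) := by
    have h2 := Real.Gamma_add_one hq.ne'
    rw [show x + s - 1 + 1 = x + s by ring] at h2
    exact h2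
  have hlhs : Real.log (Real.Gamma x * (x + s - 1) ^ s)
      = Real.log (Real.Gamma x) + s * Real.log (x + s - 1) := by
    rw [Real.log_mul hg.ne' (Real.rpow_pos_of_pos hq s).ne', Real.log_rpow hq]
  refine (Real.log_le_log_iff (by positivity) (Real.Gamma_pos_of_pos hxs)).mp ?_
  rw [hlhs]
  nth_rewrite 1 [hG] at h
  rw [Real.log_mul hq.ne' hgq.ne'] at h
  have hGlog : Real.log (Real.Gamma (x + s - 1))
      = Real.log (Real.Gamma (x + s)) - Real.log (x + s - 1) := by
    rw [hG, Real.log_mul hq.ne' hgq.ne']; ring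
  rw [hGlog] at h
  linarith

private lemma key_diff {p a b : ℝ} (hp : 0 < p) (hb : 0 < b) (hab : b ≤ a) :
    a ^ p - b ^ p ≤ p * (a - b) * max (a ^ (p - 1)) (b ^ (p - 1)) := by
  have ha : 0 < a := lt_of_lt_of_le hb hab
  have hcoef : 0 ≤ p * (a - b) := by nlinarith
  rcases le_total p 1 with hp1 | hp1
  · have ht0 : (0:ℝ) ≤ (a - b) / b := div_nonneg (by linarith) hb.le
    have h := rpow_one_add_le_one_add_mul_self (by linarith : (-1:ℝ) ≤ (a - b)/b) hp.le hp1
    rw [show 1 + (a - b) / b = a / b by field_simp; ring, Real.div_rpow ha.le hb.le] at h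
    have hbp : 0 < b ^ p := Real.rpow_pos_of_pos hb p
    have h2 : a ^ p ≤ b ^ p + p * (a - b) * (b ^ p / b) := by
      have h3 := mul_le_mul_of_nonneg_right h hbp.le
      rw [div_mul_cancel₀ _ hbp.ne'] at h3
      calc a ^ p ≤ (1 + p * ((a - b) / b)) * b ^ p := h3
        _ = b ^ p + p * (a - b) * (b ^ p / b) := by field_simp
    rw [← Real.rpow_sub_one hb.ne'] at h2
    have h4 := mul_le_mul_of_nonneg_left (le_max_right (a ^ (p-1)) (b ^ (p-1))) hcoef
    linarith
  · have ht : (-1:ℝ) ≤ (b - a) / a := (le_div_iff₀ ha).mpr (by linarith)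
    have h := one_add_mul_self_le_rpow_one_add ht hp1
    rw [show 1 + (b - a) / a = b / a by field_simp; ring, Real.div_rpow hb.le ha.le] at h
    have hap : 0 < a ^ p := Real.rpow_pos_of_pos ha p
    have h2 : a ^ p + p * (b - a) * (a ^ p / a) ≤ b ^ p := by
      have h3 := mul_le_mul_of_nonneg_right h hap.le
      rw [div_mul_cancel₀ _ hap.ne'] at h3
      calc a ^ p + p * (b - a) * (a ^ p / a) = (1 + p * ((b - a) / a)) * a ^ p := by
            field_simp
        _ ≤ b ^ p := h3
    rw [← Real.rpow_sub_one ha.ne'] at h2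
    have h4 := mul_le_mul_of_nonneg_left (le_max_left (a ^ (p-1)) (b ^ (p-1))) hcoef
    nlinarith

private lemma base_bound {q y z c : ℝ} (hy : 0 < y) (hz : 0 < z) (hc : 1 ≤ c)
    (h1 : y / c ≤ z) (h2 : z ≤ c * y) : z ^ q ≤ c ^ |q| * y ^ q := by
  have hc0 : 0 < c := by linarith
  rcases le_or_gt 0 q with hq | hq
  · rw [abs_of_nonneg hq]
    calc z ^ q ≤ (c * y) ^ q := Real.rpow_le_rpow hz.le h2 hq
      _ = c ^ q * y ^ q := Real.mul_rpow hc0.le hy.le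
  · rw [abs_of_neg hq]
    have h3 : 0 < y / c := by positivity
    calc z ^ q ≤ (y / c) ^ q := Real.rpow_le_rpow_of_nonpos h3 h1 hq.le
      _ = y ^ q / c ^ q := Real.div_rpow hy.le hc0.le q
      _ = c ^ (-q) * y ^ q := by
          rw [Real.rpow_neg hc0.le, div_eq_mul_inv, mul_comm]

private lemma ratio_bounds {α : ℝ} (hα : 0 < α) {n : ℕ} (hn : 1 ≤ n) :
    (n:ℝ) ^ α ≤ Real.Gamma ((n:ℝ) + 1 + α) / Real.Gamma ((n:ℝ) + 1) ∧
    Real.Gamma ((n:ℝ) + 1 + α) / Real.Gamma ((n:ℝ) + 1) ≤ ((n:ℝ) + 1 + α) ^ α := by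
  set m : ℕ := Nat.floor α with hm
  set s : ℝ := α - m with hsdef
  have hs0 : 0 ≤ s := by
    have := Nat.floor_le hα.le
    rw [hsdef]; linarith
  have hs1 : s ≤ 1 := by
    have := Nat.lt_floor_add_one α
    rw [hsdef]; linarith
  have hms : (m:ℝ) + s = α := by rw [hsdef]; ring
  have hn1 : (1:ℝ) ≤ (n:ℝ) := by exact_mod_cast hn
  set x : ℝ := (n:ℝ) + 1 with hx
  have hxpos : 0 < x := by rw [hx]; linarith
  have hgx : 0 < Real.Gamma x := Real.Gamma_pos_of_pos hxpos
  have hxs : 0 < x + s := by linarith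
  have hxa : x + α > 0 := by linarith
  have hnpos : (0:ℝ) < (n:ℝ) := by linarith
  have hexp : Real.Gamma (x + α) = Real.Gamma (x + s) * ∏ j ∈ Finset.range m, (x + s + j) := by
    have h := myGamma_add_nat hxs m
    rw [show x + s + (m:ℝ) = x + α by linarith] at h
    exact h
  have hlow1 : Real.Gamma x * (x + s - 1) ^ s ≤ Real.Gamma (x + s) :=
    interp_ge hxpos hs0 hs1 (by rw [hx]; linarith)
  have hup1 : Real.Gamma (x + s) ≤ Real.Gamma x * x ^ s := interp_le hxpos hs0 hs1
  have hprodlow : (n:ℝ) ^ m ≤ ∏ j ∈ Finset.range m, (x + s + j) := by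
    calc (n:ℝ) ^ m = ∏ _j ∈ Finset.range m, (n:ℝ) := by
          rw [Finset.prod_const, Finset.card_range]
      _ ≤ ∏ j ∈ Finset.range m, (x + s + j) := by
          apply Finset.prod_le_prod
          · intro j _; linarith
          · intro j _
            have : (0:ℝ) ≤ (j:ℝ) := Nat.cast_nonneg j
            rw [hx]; linarith
  have hprodup : ∏ j ∈ Finset.range m, (x + s + j) ≤ (x + α) ^ m := by
    calc ∏ j ∈ Finset.range m, (x + s + j) ≤ ∏ _j ∈ Finset.range m, (x + α) := by
          apply Finset.prod_le_prod
          · intro j _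
            have : (0:ℝ) ≤ (j:ℝ) := Nat.cast_nonneg j
            linarith
          · intro j hj
            have hjm : (j:ℝ) + 1 ≤ (m:ℝ) := by
              exact_mod_cast Nat.succ_le_of_lt (Finset.mem_range.mp hj)
            linarith
      _ = (x + α) ^ m := by rw [Finset.prod_const, Finset.card_range]
  have hss : (x + s - 1) ^ s ≥ (n:ℝ) ^ s := by
    apply Real.rpow_le_rpow hnpos.le _ hs0
    rw [hx]; linarith
  have hxsle : x ^ s ≤ (x + α) ^ s := Real.rpow_le_rpow hxpos.le (by linarith) hs0
  have hnsm : (n:ℝ) ^ s * (n:ℝ) ^ m = (n:ℝ) ^ α := by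
    rw [← Real.rpow_natCast (n:ℝ) m, ← Real.rpow_add hnpos]
    rw [show s + (m:ℝ) = α by linarith]
  have hxam : (x + α) ^ s * (x + α) ^ m = (x + α) ^ α := by
    rw [← Real.rpow_natCast (x + α) m, ← Real.rpow_add hxa]
    rw [show s + (m:ℝ) = α by linarith]
  have hprodnn : (0:ℝ) ≤ (n:ℝ) ^ m := by positivity
  have hgxs : 0 < Real.Gamma (x + s) := Real.Gamma_pos_of_pos hxs
  have hlower : Real.Gamma x * (n:ℝ) ^ α ≤ Real.Gamma (x + α) := by
    rw [hexp]
    calc Real.Gamma x * (n:ℝ) ^ α = (Real.Gamma x * (n:ℝ) ^ s) * (n:ℝ) ^ m := by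
          rw [mul_assoc, hnsm]
      _ ≤ Real.Gamma (x + s) * ∏ j ∈ Finset.range m, (x + s + j) := by
          apply mul_le_mul _ hprodlow hprodnn hgxs.le
          calc Real.Gamma x * (n:ℝ) ^ s ≤ Real.Gamma x * (x + s - 1) ^ s :=
                mul_le_mul_of_nonneg_left hss hgx.le
            _ ≤ Real.Gamma (x + s) := hlow1
  have hupper : Real.Gamma (x + α) ≤ Real.Gamma x * (x + α) ^ α := by
    rw [hexp]
    have hprodnn2 : (0:ℝ) ≤ ∏ j ∈ Finset.range m, (x + s + j) := by
      apply Finset.prod_nonneg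
      intro j _
      have : (0:ℝ) ≤ (j:ℝ) := Nat.cast_nonneg j
      linarith
    calc Real.Gamma (x + s) * ∏ j ∈ Finset.range m, (x + s + j)
        ≤ (Real.Gamma x * (x + α) ^ s) * (x + α) ^ m := by
          apply mul_le_mul _ hprodup hprodnn2 (by positivity)
          exact hup1.trans (mul_le_mul_of_nonneg_left hxsle hgx.le)
      _ = Real.Gamma x * (x + α) ^ α := by rw [mul_assoc, hxam]
  constructor
  · rw [le_div_iff₀ hgx]
    calc (n:ℝ) ^ α * Real.Gamma x = Real.Gamma x * (n:ℝ) ^ α := by ring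
      _ ≤ Real.Gamma (x + α) := hlower
      _ = Real.Gamma ((n:ℝ) + 1 + α) := by rw [hx]
  · rw [div_le_iff₀ hgx]
    calc Real.Gamma ((n:ℝ) + 1 + α) = Real.Gamma (x + α) := by rw [hx]
      _ ≤ Real.Gamma x * (x + α) ^ α := hupper
      _ = ((n:ℝ) + 1 + α) ^ α * Real.Gamma x := by rw [hx]; ring

/-- the Stirling estimate of Lemma 2.2:
with `k_n = Γ(α+n+1)/(Γ(α)Γ(n+1))`, one has `|k_{⌊y⌋} − y^α/Γ(α)| ≤ C` for
`y ∈ [0,1)` and `|k_{⌊y⌋} − y^α/Γ(α)| ≤ C·y^{α−1}` for `y ≥ 1`. -/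
theorem stmt7 (α : ℝ) (hα : 0 < α)
    (k : ℕ → ℝ)
    (hk : ∀ n : ℕ, k n = Real.Gamma (α + n + 1) / (Real.Gamma α * Real.Gamma (n + 1))) :
    ∃ C > (0 : ℝ), ∀ y : ℝ, 0 ≤ y →
      (y < 1 → |k (Nat.floor y) - y ^ α / Real.Gamma α| ≤ C) ∧
      (1 ≤ y → |k (Nat.floor y) - y ^ α / Real.Gamma α| ≤ C * y ^ (α - 1)) := by
  have hΓ : 0 < Real.Gamma α := Real.Gamma_pos_of_pos hα
  obtain ⟨E, hE⟩ : ∃ E : ℝ, E = (2 + α) ^ |α - 1| := ⟨_, rfl⟩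
  have hEpos : 0 < E := by rw [hE]; exact Real.rpow_pos_of_pos (by linarith) _
  obtain ⟨A, hA⟩ : ∃ A : ℝ, A = α + 1 / Real.Gamma α := ⟨_, rfl⟩
  obtain ⟨B, hB⟩ : ∃ B : ℝ, B = α * (2 + α) * E / Real.Gamma α := ⟨_, rfl⟩
  have hApos : 0 < A := by rw [hA]; positivity
  have hBpos : 0 < B := by rw [hB]; positivity
  refine ⟨A + B + 1, by positivity, ?_⟩
  intro y hy
  constructor
  · intro hy1
    have h0 : Nat.floor y = 0 := Nat.floor_eq_zero.mpr hy1
    have hk0 : k 0 = α := by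
      rw [hk]
      push_cast
      rw [show α + 0 + 1 = α + 1 by ring, Real.Gamma_add_one hα.ne',
        show (0:ℝ) + 1 = 1 by ring, Real.Gamma_one]
      field_simp
    rw [h0, hk0]
    have hyα : 0 ≤ y ^ α := Real.rpow_nonneg hy α
    have hyα1 : y ^ α ≤ 1 := Real.rpow_le_one hy hy1.le hα.le
    have h1Γ : y ^ α / Real.Gamma α ≤ 1 / Real.Gamma α := by gcongr
    have h2Γ : 0 ≤ y ^ α / Real.Gamma α := by positivity
    rw [abs_le]
    constructor
    · rw [hA]; linarith
    · rw [hA]; linarith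
  · intro hy1
    obtain ⟨n, hn⟩ : ∃ n : ℕ, n = Nat.floor y := ⟨_, rfl⟩
    rw [← hn]
    have hn1 : 1 ≤ n := hn ▸ Nat.le_floor (by exact_mod_cast hy1)
    have hnr : (1:ℝ) ≤ (n:ℝ) := by exact_mod_cast hn1
    have hfl : (n:ℝ) ≤ y := hn ▸ Nat.floor_le hy
    have hfu : y < (n:ℝ) + 1 := hn ▸ Nat.lt_floor_add_one y
    have hnpos : (0:ℝ) < n := by linarith
    have hypos : (0:ℝ) < y := by linarith
    have hy2n : y ≤ 2 * n := by linarith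
    obtain ⟨hR1, hR2⟩ := ratio_bounds hα hn1
    obtain ⟨R, hRdef⟩ : ∃ R : ℝ, R = Real.Gamma ((n:ℝ) + 1 + α) / Real.Gamma ((n:ℝ) + 1) :=
      ⟨_, rfl⟩
    rw [← hRdef] at hR1 hR2
    have hGn : 0 < Real.Gamma ((n:ℝ) + 1) := Real.Gamma_pos_of_pos (by linarith)
    have hkn : k n = R / Real.Gamma α := by
      rw [hk n, hRdef, div_div, show α + (n:ℝ) + 1 = (n:ℝ) + 1 + α by ring,
        mul_comm (Real.Gamma ((n:ℝ) + 1))]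
    have hc1 : (1:ℝ) ≤ 2 + α := by linarith
    have hy' : 0 < y ^ (α - 1) := Real.rpow_pos_of_pos hypos _
    have bb1 : (n:ℝ) ^ (α - 1) ≤ E * y ^ (α - 1) := by
      rw [hE]
      apply base_bound hypos hnpos hc1
      · rw [div_le_iff₀ (by linarith : (0:ℝ) < 2 + α)]
        have he : (n:ℝ) * (2 + α) = 2 * n + α * n := by ring
        linarith [mul_nonneg hα.le hnpos.le]
      · have he : (2 + α) * y = 2 * y + α * y := by ring
        linarith [mul_nonneg hα.le hypos.le]
    have bb2 : ((n:ℝ) + 1 + α) ^ (α - 1) ≤ E * y ^ (α - 1) := by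
      rw [hE]
      apply base_bound hypos (by linarith) hc1
      · rw [div_le_iff₀ (by linarith : (0:ℝ) < 2 + α)]
        have he : ((n:ℝ) + 1 + α) * (2 + α)
            = 2 * n + 2 + 2 * α + α * n + α + α * α := by ring
        linarith [mul_nonneg hα.le hnpos.le, mul_nonneg hα.le hα.le]
      · have he : (2 + α) * y = 2 * y + α * y := by ring
        have hαy : α ≤ α * y := le_mul_of_one_le_right hα.le hy1
        linarith
    have bb3 : y ^ (α - 1) ≤ E * y ^ (α - 1) := by
      rw [hE]
      apply base_bound hypos hypos hc1
      · rw [div_le_iff₀ (by linarith : (0:ℝ) < 2 + α)]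
        have he : y * (2 + α) = 2 * y + α * y := by ring
        linarith [mul_nonneg hα.le hypos.le]
      · have he : (2 + α) * y = 2 * y + α * y := by ring
        linarith [mul_nonneg hα.le hypos.le]
    have hEy : (0:ℝ) ≤ E * y ^ (α - 1) := by positivity
    have hd1 : ((n:ℝ) + 1 + α) ^ α - (n:ℝ) ^ α ≤ α * (1 + α) * (E * y ^ (α - 1)) := by
      have hkd := key_diff hα hnpos (by linarith : (n:ℝ) ≤ (n:ℝ) + 1 + α)
      have hmax : max (((n:ℝ) + 1 + α) ^ (α - 1)) ((n:ℝ) ^ (α - 1)) ≤ E * y ^ (α - 1) :=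
        max_le bb2 bb1
      have hcoef : (0:ℝ) ≤ α * ((n:ℝ) + 1 + α - n) := by
        rw [show (n:ℝ) + 1 + α - n = 1 + α by ring]; positivity
      calc ((n:ℝ) + 1 + α) ^ α - (n:ℝ) ^ α
          ≤ α * ((n:ℝ) + 1 + α - (n:ℝ)) * max (((n:ℝ) + 1 + α) ^ (α - 1)) ((n:ℝ) ^ (α - 1)) := hkd
        _ ≤ α * ((n:ℝ) + 1 + α - (n:ℝ)) * (E * y ^ (α - 1)) :=
            mul_le_mul_of_nonneg_left hmax hcoef
        _ = α * (1 + α) * (E * y ^ (α - 1)) := by ring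
    have hd2 : y ^ α - (n:ℝ) ^ α ≤ α * (E * y ^ (α - 1)) := by
      have hkd := key_diff hα hnpos hfl
      have hmax : max (y ^ (α - 1)) ((n:ℝ) ^ (α - 1)) ≤ E * y ^ (α - 1) := max_le bb3 bb1
      have hM0 : (0:ℝ) ≤ max (y ^ (α - 1)) ((n:ℝ) ^ (α - 1)) :=
        le_trans hy'.le (le_max_left _ _)
      calc y ^ α - (n:ℝ) ^ α ≤ α * (y - (n:ℝ)) * max (y ^ (α - 1)) ((n:ℝ) ^ (α - 1)) := hkd
        _ ≤ α * 1 * max (y ^ (α - 1)) ((n:ℝ) ^ (α - 1)) := by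
            apply mul_le_mul_of_nonneg_right _ hM0
            apply mul_le_mul_of_nonneg_left (by linarith) hα.le
        _ = α * max (y ^ (α - 1)) ((n:ℝ) ^ (α - 1)) := by ring
        _ ≤ α * (E * y ^ (α - 1)) := mul_le_mul_of_nonneg_left hmax hα.le
    have hyn : (n:ℝ) ^ α ≤ y ^ α := Real.rpow_le_rpow hnpos.le hfl hα.le
    have hsplit : α * (2 + α) * (E * y ^ (α - 1))
        = α * (1 + α) * (E * y ^ (α - 1)) + α * (E * y ^ (α - 1)) := by ring
    have hα1Ey : (0:ℝ) ≤ α * (1 + α) * (E * y ^ (α - 1)) := by positivity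
    have hαEy : (0:ℝ) ≤ α * (E * y ^ (α - 1)) := by positivity
    have habs : |R - y ^ α| ≤ α * (2 + α) * (E * y ^ (α - 1)) := by
      rw [abs_le]
      constructor
      · linarith
      · linarith
    rw [hkn, show R / Real.Gamma α - y ^ α / Real.Gamma α = (R - y ^ α) / Real.Gamma α by ring,
      abs_div, abs_of_pos hΓ, div_le_iff₀ hΓ]
    have hBeq : B * y ^ (α - 1) * Real.Gamma α = α * (2 + α) * (E * y ^ (α - 1)) := by
      rw [hB]; field_simp
    have hring : (A + B + 1) * y ^ (α - 1) * Real.Gamma α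
        = B * y ^ (α - 1) * Real.Gamma α + (A + 1) * y ^ (α - 1) * Real.Gamma α := by ring
    have hAy : (0:ℝ) ≤ (A + 1) * y ^ (α - 1) * Real.Gamma α :=
      mul_nonneg (mul_nonneg (by linarith) hy'.le) hΓ.le
    linarith
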